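/- Let T ∈ ℝ^{d×d} be positive semidefinite symmetric Toeplitz, let x ~ N(0,T), let Δ > 0, let τ be a triangular dither independent of x, and set ẋ = Q_Δ(x + τ) entrywise. Then for all indices j, k, E[(ẋ_j ẋ_k)²] ≤ 24 ‖T‖₂² + (81/2) Δ⁴. -/

import Mathlib

open MeasureTheory ProbabilityTheory Matrix Real

noncomputable section

/-- The uniform quantizer with level `Δ`: `Q_Δ(x) = Δ(⌊x/Δ⌋ + 1/2)`. -/
def quant (Δ x : ℝ) : ℝ := Δ * (⌊x / Δ⌋ + 1 / 2)

/-- The uniform distribution on `[-Δ/2, Δ/2]`. -/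
def unifMeasure (Δ : ℝ) : Measure ℝ :=
  (ENNReal.ofReal Δ)⁻¹ • (volume.restrict (Set.Icc (-(Δ / 2)) (Δ / 2)))

/-- The triangular-dither distribution: the law of the sum of two independent
uniform random variables on `[-Δ/2, Δ/2]`. -/
def triMeasure (Δ : ℝ) : Measure ℝ :=
  Measure.map (fun p : ℝ × ℝ => p.1 + p.2) ((unifMeasure Δ).prod (unifMeasure Δ))

/-- The centered multivariate Gaussian measure `N(0, T)` on `ℝ^d`, realized as the
pushforward of the standard Gaussian by the positive semidefinite square root of `T`. -/
def multiGaussian {d : ℕ} (T : Matrix (Fin d) (Fin d) ℝ) (hT : T.PosSemidef) :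
    Measure (Fin d → ℝ) :=
  Measure.map (fun z => ((hT.1.eigenvectorUnitary : Matrix (Fin d) (Fin d) ℝ) *
      diagonal (fun i => ((Real.sqrt (hT.1.eigenvalues i) : ℝ) : ℝ)) *
      (star hT.1.eigenvectorUnitary : Matrix (Fin d) (Fin d) ℝ)).mulVec z) (Measure.pi fun _ : Fin d => gaussianReal 0 1)

/-- `R_s`: the ordered pairs `(j, k) ∈ R × R` with `j - k = s`. -/
def pairsOf {d : ℕ} (R : Finset (Fin d)) (s : ℕ) : Finset (Fin d × Fin d) :=
  (R ×ˢ R).filter fun p => (p.1 : ℕ) = (p.2 : ℕ) + s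

/-- A ruler: each distance `s ∈ {0, …, d-1}` is realized by some pair in `R`. -/
def IsRuler {d : ℕ} (R : Finset (Fin d)) : Prop :=
  ∀ s < d, (pairsOf R s).Nonempty

/-- The coverage coefficient `φ(R) = Σ_{s=1}^{d-1} 1/|R_s|`. -/
def coverage {d : ℕ} (R : Finset (Fin d)) : ℝ :=
  ∑ s ∈ Finset.Ico 1 d, (1 : ℝ) / (pairsOf R s).card

/-- The symmetric Toeplitz matrix generated by `a`, with `Toep(a)_{j,k} = a_{|j-k|}`. -/
def toep {d : ℕ} (a : Fin d → ℝ) : Matrix (Fin d) (Fin d) ℝ :=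
  fun j k => a ⟨Nat.dist j.1 k.1, by
    have hj := j.isLt; have hk := k.isLt; simp only [Nat.dist]; omega⟩

/-- The `ℓ²` operator (spectral) norm of a matrix. -/
def opNorm {m : Type*} [Fintype m] [DecidableEq m] (A : Matrix m m ℝ) : ℝ :=
  ‖Matrix.toEuclideanCLM (𝕜 := ℝ) A‖

/-- The Frobenius norm of a matrix. -/
def frobNorm {m : Type*} [Fintype m] (A : Matrix m m ℝ) : ℝ :=
  Real.sqrt (∑ i, ∑ j, (A i j) ^ 2)

/-- The entrywise maximum norm of a matrix. -/
def maxNorm {m : Type*} [Fintype m] (A : Matrix m m ℝ) : ℝ :=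
  ⨆ i, ⨆ j, |A i j|

/-- The principal submatrix of `A` with rows and columns indexed by `R`. -/
def subMatrix {d : ℕ} (A : Matrix (Fin d) (Fin d) ℝ) (R : Finset (Fin d)) :
    Matrix R R ℝ :=
  A.submatrix (fun i : R => (i : Fin d)) (fun j : R => (j : Fin d))

/-- The ruler-based quantized coefficient estimator
`â_s = (1/(n|R_s|)) Σ_l Σ_{(j,k)∈R_s} ẋ_j^{(l)} ẋ_k^{(l)} − (Δ²/4)·1{s=0}`. -/
def hatCoef {d : ℕ} (Δ : ℝ) (R : Finset (Fin d)) (n : ℕ)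
    (xdot : Fin n → Fin d → ℝ) (s : ℕ) : ℝ :=
  (1 / (n * (pairsOf R s).card)) *
      ∑ l, ∑ p ∈ pairsOf R s, xdot l p.1 * xdot l p.2
    - Δ ^ 2 / 4 * (if s = 0 then 1 else 0)

/-- The ruler-based quantized Toeplitz covariance estimator `T̂ = Toep(â)`. -/
def hatT {d : ℕ} (Δ : ℝ) (R : Finset (Fin d)) (n : ℕ)
    (xdot : Fin n → Fin d → ℝ) : Matrix (Fin d) (Fin d) ℝ :=
  toep fun s => hatCoef Δ R n xdot s.1

/-- The quantized samples `ẋ^{(l)} = Q_Δ(x^{(l)} + τ^{(l)})`, as a function of the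
random outcome `ω`. -/
def xdotOf {d n : ℕ} {Ω : Type*} (Δ : ℝ) (x τ : Fin n → Ω → Fin d → ℝ) (ω : Ω) :
    Fin n → Fin d → ℝ :=
  fun l i => quant Δ (x l ω i + τ l ω i)

/-- The setting of the ruler-based quantized Toeplitz covariance estimation problem:
`T` is a positive semidefinite symmetric Toeplitz matrix, `x^{(1)}, …, x^{(n)}` are
i.i.d. samples from `N(0, T)`, the dithers `τ^{(1)}, …, τ^{(n)}` have i.i.d. triangular
entries at level `Δ`, and all samples and dithers are jointly independent. -/
structure QuantSetting {d n : ℕ} {Ω : Type*} [MeasurableSpace Ω] (μ : Measure Ω)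
    (T : Matrix (Fin d) (Fin d) ℝ) (Δ : ℝ)
    (x τ : Fin n → Ω → Fin d → ℝ) : Prop where
  psd : T.PosSemidef
  toeplitz : ∃ a : Fin d → ℝ, T = toep a
  quantLevel : 0 < Δ
  meas_x : ∀ l, Measurable (x l)
  meas_τ : ∀ l, Measurable (τ l)
  law_x : ∀ l, μ.map (x l) = multiGaussian T psd
  law_τ : ∀ l, μ.map (τ l) = Measure.pi fun _ : Fin d => triMeasure Δ
  indep : iIndepFun (Sum.elim x τ) μ

end
noncomputable section

/-- The ruler `R_α = {1,…,d^α} ∪ {d, d−d^{1−α}, …, d−(d^α−1)d^{1−α}}` (with the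
positions `1,…,d` represented by `Fin d`), parametrized by `a = d^α`, `b = d^{1−α}`. -/
def rulerAlpha (d a b : ℕ) : Finset (Fin d) :=
  (Finset.univ.filter fun j : Fin d => (j : ℕ) < a) ∪
    (Finset.univ.filter fun j : Fin d => ∃ t ∈ Finset.range a, (j : ℕ) + t * b + 1 = d)

/-- `L_e(x) = e_0 + 2 Σ_{s=1}^{d-1} e_s cos(2πsx)`. -/
def Lfun {d : ℕ} (e : Fin d → ℝ) (x : ℝ) : ℝ :=
  ∑ s : Fin d, (if (s : ℕ) = 0 then 1 else 2) * e s * Real.cos (2 * Real.pi * s * x)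

/-- Entrywise thresholding of a matrix at level `ζ`. -/
def thresholdMat {d : ℕ} (ζ : ℝ) (A : Matrix (Fin d) (Fin d) ℝ) :
    Matrix (Fin d) (Fin d) ℝ :=
  fun i j => if ζ ≤ |A i j| then A i j else 0

end

noncomputable section
namespace MyAux
open MeasureTheory ProbabilityTheory Matrix Real


lemma myodd_zero (f : ℝ → ℝ) (ho : ∀ x, f (-x) = - f x) : ∫ x, f x = 0 := by
  have h := integral_neg_eq_self f (volume : Measure ℝ)
  simp only [ho, integral_neg] at h
  linarith


lemma myhalf_rpow (y : ℝ) : (1/2:ℝ) ^ y = (2:ℝ) ^ (-y) := by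
  rw [one_div, Real.inv_rpow (by norm_num), ← Real.rpow_neg (by norm_num)]

lemma myGamma32 : Real.Gamma ((3:ℝ)/2) = Real.sqrt π / 2 := by
  rw [show ((3:ℝ)/2) = 1/2 + 1 by norm_num, Real.Gamma_add_one (by norm_num),
    Real.Gamma_one_half_eq]; ring

lemma myGamma52 : Real.Gamma ((5:ℝ)/2) = 3 * Real.sqrt π / 4 := by
  rw [show ((5:ℝ)/2) = 3/2 + 1 by norm_num, Real.Gamma_add_one (by norm_num), myGamma32]; ring

lemma myrpow32 : (2:ℝ) ^ ((3:ℝ)/2) = 2 * Real.sqrt 2 := by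
  rw [show ((3:ℝ)/2) = 1 + 1/2 by norm_num, Real.rpow_add two_pos, Real.rpow_one,
    ← Real.sqrt_eq_rpow]

lemma myrpow52 : (2:ℝ) ^ ((5:ℝ)/2) = 4 * Real.sqrt 2 := by
  rw [show ((5:ℝ)/2) = 2 + 1/2 by norm_num, Real.rpow_add two_pos, ← Real.sqrt_eq_rpow,
    show ((2:ℝ) ^ (2:ℝ)) = (2:ℝ)^(2:ℕ) by rw [← Real.rpow_natCast 2 2]; norm_num]
  norm_num

lemma mygauss_Ioi (n : ℕ) :
    ∫ x in Set.Ioi (0:ℝ), x ^ n * Real.exp (-(1/2) * x ^ 2)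
      = (1/2:ℝ) ^ (-((n:ℝ) + 1) / 2) * (1 / 2) * Real.Gamma (((n:ℝ) + 1) / 2) := by
  have h := integral_rpow_mul_exp_neg_mul_rpow (p := 2) (q := (n:ℝ)) (b := 1/2)
    two_pos (lt_of_lt_of_le (by norm_num) (Nat.cast_nonneg n)) (by norm_num)
  have h2 : ∀ x : ℝ, x ^ ((2:ℕ):ℝ) = x ^ (2:ℕ) := fun x => Real.rpow_natCast x 2
  simp only [Nat.cast_ofNat] at h2
  simp only [Real.rpow_natCast, h2] at h
  exact h

lemma myeven_line (f : ℝ → ℝ) (hf : Integrable f) (he : ∀ x, f (-x) = f x) :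
    ∫ x, f x = 2 * ∫ x in Set.Ioi (0:ℝ), f x := by
  have h1 := integral_add_compl (measurableSet_Ioi (a := (0:ℝ))) hf
  rw [Set.compl_Ioi] at h1
  have h2 := integral_comp_neg_Ioi (0:ℝ) f
  simp only [he, neg_zero] at h2
  linarith

lemma myint_pow_gauss (n : ℕ) :
    Integrable (fun x : ℝ => x ^ n * Real.exp (-(1/2) * x ^ 2)) := by
  have h := integrable_rpow_mul_exp_neg_mul_sq (b := 1/2) (by norm_num)
    (s := (n:ℝ)) (lt_of_lt_of_le (by norm_num) (Nat.cast_nonneg n))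
  simpa [Real.rpow_natCast] using h

lemma myM2 : ∫ x : ℝ, x ^ 2 * Real.exp (-(1/2) * x ^ 2) = Real.sqrt (2*π) := by
  rw [myeven_line _ (myint_pow_gauss 2) (by intro x; ring_nf), mygauss_Ioi 2]
  rw [show (-(((2:ℕ):ℝ) + 1) / 2) = -((3:ℝ)/2) by norm_num,
    show ((((2:ℕ):ℝ) + 1) / 2) = (3:ℝ)/2 by norm_num, myhalf_rpow, neg_neg, myrpow32, myGamma32,
    Real.sqrt_mul (by norm_num : (0:ℝ) ≤ 2)]
  ring

lemma myM4 : ∫ x : ℝ, x ^ 4 * Real.exp (-(1/2) * x ^ 2) = 3 * Real.sqrt (2*π) := by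
  rw [myeven_line _ (myint_pow_gauss 4) (by intro x; ring_nf), mygauss_Ioi 4]
  rw [show (-(((4:ℕ):ℝ) + 1) / 2) = -((5:ℝ)/2) by norm_num,
    show ((((4:ℕ):ℝ) + 1) / 2) = (5:ℝ)/2 by norm_num, myhalf_rpow, neg_neg, myrpow52, myGamma52,
    Real.sqrt_mul (by norm_num : (0:ℝ) ≤ 2)]
  ring

lemma myM1 : ∫ x : ℝ, x ^ 1 * Real.exp (-(1/2) * x ^ 2) = 0 := by
  apply myodd_zero; intro x; ring_nf

lemma myM3 : ∫ x : ℝ, x ^ 3 * Real.exp (-(1/2) * x ^ 2) = 0 := by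
  apply myodd_zero; intro x; ring_nf



lemma mypdf_eq (x : ℝ) : gaussianPDFReal 0 1 x = (Real.sqrt (2*π))⁻¹ * Real.exp (-(1/2) * x ^ 2) := by
  rw [gaussianPDFReal]
  norm_num
  left; ring

lemma mygr_eq : gaussianReal 0 1 =
    volume.withDensity fun x => ((gaussianPDFReal 0 1 x).toNNReal : ENNReal) := by
  rw [gaussianReal_of_var_ne_zero 0 one_ne_zero]; rfl

lemma myint_gr (g : ℝ → ℝ) :
    ∫ x, g x ∂(gaussianReal 0 1) = ∫ x, gaussianPDFReal 0 1 x * g x := by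
  rw [mygr_eq, integral_withDensity_eq_integral_smul
    ((measurable_gaussianPDFReal 0 1).real_toNNReal) g]
  congr 1; funext x
  simp [NNReal.smul_def, Real.coe_toNNReal _ (gaussianPDFReal_nonneg 0 1 x)]

lemma myintegrable_gr_iff (g : ℝ → ℝ) :
    Integrable g (gaussianReal 0 1) ↔ Integrable (fun x => gaussianPDFReal 0 1 x * g x) volume := by
  rw [mygr_eq, integrable_withDensity_iff_integrable_smul
    ((measurable_gaussianPDFReal 0 1).real_toNNReal)]
  constructor <;> intro h <;> refine h.congr (ae_of_all _ fun x => ?_) <;>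
    simp [NNReal.smul_def, Real.coe_toNNReal _ (gaussianPDFReal_nonneg 0 1 x)]

lemma mysqrt2pi_pos : 0 < Real.sqrt (2*π) := Real.sqrt_pos.mpr (by positivity)

lemma mymom_eq (k : ℕ) : ∫ x, x ^ k ∂(gaussianReal 0 1)
    = (Real.sqrt (2*π))⁻¹ * ∫ x, x ^ k * Real.exp (-(1/2) * x ^ 2) := by
  rw [myint_gr]
  rw [show (fun x : ℝ => gaussianPDFReal 0 1 x * x ^ k)
    = fun x : ℝ => (Real.sqrt (2*π))⁻¹ * (x ^ k * Real.exp (-(1/2) * x ^ 2)) by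
      funext x; rw [mypdf_eq]; ring]
  rw [MeasureTheory.integral_const_mul]

lemma myint_pow_gr (k : ℕ) : Integrable (fun x : ℝ => x ^ k) (gaussianReal 0 1) := by
  rw [myintegrable_gr_iff]
  have h := (myint_pow_gauss k).const_mul (Real.sqrt (2*π))⁻¹
  refine h.congr (ae_of_all _ fun x => ?_)
  simp only [mypdf_eq]; ring



lemma mymom1 : ∫ x, x ^ 1 ∂(gaussianReal 0 1) = 0 := by
  rw [mymom_eq, myM1, mul_zero]
lemma mymom3 : ∫ x, x ^ 3 ∂(gaussianReal 0 1) = 0 := by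
  rw [mymom_eq, myM3, mul_zero]
lemma mymom2 : ∫ x, x ^ 2 ∂(gaussianReal 0 1) = 1 := by
  rw [mymom_eq, myM2, inv_mul_cancel₀ mysqrt2pi_pos.ne']
lemma mymom4 : ∫ x, x ^ 4 ∂(gaussianReal 0 1) = 3 := by
  rw [mymom_eq, myM4, mul_comm (3:ℝ), ← mul_assoc, inv_mul_cancel₀ mysqrt2pi_pos.ne', one_mul]

lemma myint_pow_le {α : Type*} [MeasurableSpace α] {μ : Measure α} [IsProbabilityMeasure μ]
    {f : α → ℝ} (hm : Measurable f) (h4 : Integrable (fun a => (f a) ^ 4) μ)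
    {k : ℕ} (hk : k ≤ 4) : Integrable (fun a => (f a) ^ k) μ := by
  refine Integrable.mono' ((integrable_const (1:ℝ)).add h4)
    ((hm.pow_const k).aestronglyMeasurable) (ae_of_all _ fun a => ?_)
  rw [Real.norm_eq_abs, abs_pow]
  simp only [Pi.add_apply]
  rcases le_total (|f a|) 1 with h | h
  · have h1 : |f a| ^ k ≤ 1 := pow_le_one₀ (abs_nonneg _) h
    have h4n : (0:ℝ) ≤ f a ^ 4 := by positivity
    linarith
  · have h2 : |f a| ^ k ≤ |f a| ^ 4 := pow_le_pow_right₀ h hk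
    have h3 : |f a| ^ 4 = f a ^ 4 := by rw [← abs_pow, abs_of_nonneg (by positivity)]
    linarith

lemma mykey (d : ℕ) (c : Fin d → ℝ) :
    Integrable (fun z => (∑ m, c m * z m) ^ 4) (Measure.pi fun _ : Fin d => gaussianReal 0 1) ∧
    (∫ z, (∑ m, c m * z m) ^ 2 ∂(Measure.pi fun _ : Fin d => gaussianReal 0 1)
      = ∑ m, (c m) ^ 2) ∧
    (∫ z, (∑ m, c m * z m) ^ 4 ∂(Measure.pi fun _ : Fin d => gaussianReal 0 1)
      = 3 * (∑ m, (c m) ^ 2) ^ 2) := by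
  induction d with
  | zero => refine ⟨?_, ?_, ?_⟩ <;> simp
  | succ n ih =>
      set γ := gaussianReal 0 1 with hγ
      set Pn : Measure (Fin n → ℝ) := Measure.pi fun _ : Fin n => γ with hPn
      obtain ⟨ih4, ihm2, ihm4⟩ := ih (fun m => c m.succ)
      set S : (Fin n → ℝ) → ℝ := fun y => ∑ m : Fin n, c m.succ * y m with hS
      set A : ℝ := ∑ m : Fin n, (c m.succ) ^ 2 with hA
      have hSmeas : Measurable S := by
        refine Finset.measurable_sum _ fun m _ => ?_
        exact (measurable_pi_apply m).const_mul _
      have hSk : ∀ k, k ≤ 4 → Integrable (fun y => (S y) ^ k) Pn := fun k hk =>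
        myint_pow_le hSmeas ih4 hk
      have mp := MeasureTheory.measurePreserving_piFinSuccAbove
        (fun _ : Fin (n+1) => γ) 0
      set e := MeasurableEquiv.piFinSuccAbove (fun _ : Fin (n+1) => ℝ) 0 with he
      have hint : ∀ F : (Fin (n+1) → ℝ) → ℝ,
          ∫ z, F z ∂(Measure.pi fun _ : Fin (n+1) => γ)
            = ∫ p, F (e.symm p) ∂(γ.prod Pn) :=
        fun F => ((mp.symm e).integral_comp e.symm.measurableEmbedding F).symm
      have hintg : ∀ F : (Fin (n+1) → ℝ) → ℝ,
          Integrable (fun p => F (e.symm p)) (γ.prod Pn) →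
            Integrable F (Measure.pi fun _ : Fin (n+1) => γ) := by
        intro F hF
        exact ((mp.symm e).integrable_comp_emb e.symm.measurableEmbedding).mp hF
      have hcomp : ∀ (p : ℝ × (Fin n → ℝ)) (k : ℕ),
          (∑ m, c m * (e.symm p) m) ^ k = (c 0 * p.1 + S p.2) ^ k := by
        intro p k
        have h0 : e.symm p = Fin.insertNth 0 p.1 p.2 := rfl
        rw [h0, Fin.sum_univ_succ]
        simp [hS]
      -- gaussian side integrability
      have hgk : ∀ (C : ℝ) (k : ℕ), Integrable (fun a : ℝ => C * a ^ k) γ :=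
        fun C k => (myint_pow_gr k).const_mul C
      -- the five product terms
      have hterm : ∀ (C : ℝ) (j l : ℕ), l ≤ 4 →
          Integrable (fun p : ℝ × (Fin n → ℝ) => (C * p.1 ^ j) * (S p.2) ^ l) (γ.prod Pn) :=
        fun C j l hl => (hgk C j).mul_prod (hSk l hl)
      have hterm_int : ∀ (C : ℝ) (j l : ℕ),
          ∫ p : ℝ × (Fin n → ℝ), (C * p.1 ^ j) * (S p.2) ^ l ∂(γ.prod Pn)
            = (C * ∫ a, a ^ j ∂γ) * ∫ y, (S y) ^ l ∂Pn := by
        intro C j l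
        rw [integral_prod_mul (μ := γ) (ν := Pn) (fun a => C * a ^ j) (fun y => (S y) ^ l),
          MeasureTheory.integral_const_mul]
      have mymom0 : ∫ a, a ^ 0 ∂γ = 1 := by simp
      have hPn0 : ∫ y, (S y) ^ 0 ∂Pn = 1 := by simp [hPn]
      have hfun4 : (fun p : ℝ × (Fin n → ℝ) => (c 0 * p.1 + S p.2) ^ 4)
          = fun p => (c 0 ^ 4 * p.1 ^ 4) * (S p.2) ^ 0 + ((4 * c 0 ^ 3 * p.1 ^ 3) * (S p.2) ^ 1
            + ((6 * c 0 ^ 2 * p.1 ^ 2) * (S p.2) ^ 2 + ((4 * c 0 * p.1 ^ 1) * (S p.2) ^ 3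
            + (1 * p.1 ^ 0) * (S p.2) ^ 4))) := by
        funext p; ring
      have hfun2 : (fun p : ℝ × (Fin n → ℝ) => (c 0 * p.1 + S p.2) ^ 2)
          = fun p => (c 0 ^ 2 * p.1 ^ 2) * (S p.2) ^ 0 + ((2 * c 0 * p.1 ^ 1) * (S p.2) ^ 1
            + (1 * p.1 ^ 0) * (S p.2) ^ 2) := by
        funext p; ring
      have h41 := hterm (c 0 ^ 4) 4 0 (by norm_num)
      have h42 := hterm (4 * c 0 ^ 3) 3 1 (by norm_num)
      have h43 := hterm (6 * c 0 ^ 2) 2 2 (by norm_num)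
      have h44 := hterm (4 * c 0) 1 3 (by norm_num)
      have h45 := hterm 1 0 4 (by norm_num)
      have h21 := hterm (c 0 ^ 2) 2 0 (by norm_num)
      have h22 := hterm (2 * c 0) 1 1 (by norm_num)
      have h23 := hterm 1 0 2 (by norm_num)
      have h223 : Integrable (fun p : ℝ × (Fin n → ℝ) =>
          2 * c 0 * p.1 ^ 1 * S p.2 ^ 1 + 1 * p.1 ^ 0 * S p.2 ^ 2) (γ.prod Pn) := h22.add h23
      have h445 : Integrable (fun p : ℝ × (Fin n → ℝ) =>
          4 * c 0 * p.1 ^ 1 * S p.2 ^ 3 + 1 * p.1 ^ 0 * S p.2 ^ 4) (γ.prod Pn) := h44.add h45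
      have h3445 : Integrable (fun p : ℝ × (Fin n → ℝ) =>
          6 * c 0 ^ 2 * p.1 ^ 2 * S p.2 ^ 2 + (4 * c 0 * p.1 ^ 1 * S p.2 ^ 3
            + 1 * p.1 ^ 0 * S p.2 ^ 4)) (γ.prod Pn) := h43.add h445
      have h23445 : Integrable (fun p : ℝ × (Fin n → ℝ) =>
          4 * c 0 ^ 3 * p.1 ^ 3 * S p.2 ^ 1 + (6 * c 0 ^ 2 * p.1 ^ 2 * S p.2 ^ 2
            + (4 * c 0 * p.1 ^ 1 * S p.2 ^ 3 + 1 * p.1 ^ 0 * S p.2 ^ 4))) (γ.prod Pn) :=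
        h42.add h3445
      have hsum : (∑ m : Fin (n+1), (c m) ^ 2) = c 0 ^ 2 + A := by
        rw [Fin.sum_univ_succ]
      refine ⟨?_, ?_, ?_⟩
      · apply hintg
        have : (fun p => (∑ m : Fin (n+1), c m * (e.symm p) m) ^ 4)
            = fun p : ℝ × (Fin n → ℝ) => (c 0 * p.1 + S p.2) ^ 4 := by
          funext p; exact hcomp p 4
        rw [this, hfun4]
        exact h41.add (h42.add (h43.add (h44.add h45)))
      · rw [hint]
        have : (fun p => (∑ m : Fin (n+1), c m * (e.symm p) m) ^ 2)
            = fun p : ℝ × (Fin n → ℝ) => (c 0 * p.1 + S p.2) ^ 2 := by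
          funext p; exact hcomp p 2
        rw [show (∫ p, (∑ m : Fin (n+1), c m * (e.symm p) m) ^ 2 ∂(γ.prod Pn))
            = ∫ p : ℝ × (Fin n → ℝ), (c 0 * p.1 + S p.2) ^ 2 ∂(γ.prod Pn) by rw [this]]
        rw [hfun2, integral_add h21 h223, integral_add h22 h23]
        rw [hterm_int, hterm_int, hterm_int, mymom2, mymom1, mymom0, hPn0]
        rw [show (∫ (y : Fin n → ℝ), S y ^ 2 ∂Pn) = A from ihm2, hsum]
        ring
      · rw [hint]
        have : (fun p => (∑ m : Fin (n+1), c m * (e.symm p) m) ^ 4)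
            = fun p : ℝ × (Fin n → ℝ) => (c 0 * p.1 + S p.2) ^ 4 := by
          funext p; exact hcomp p 4
        rw [show (∫ p, (∑ m : Fin (n+1), c m * (e.symm p) m) ^ 4 ∂(γ.prod Pn))
            = ∫ p : ℝ × (Fin n → ℝ), (c 0 * p.1 + S p.2) ^ 4 ∂(γ.prod Pn) by rw [this]]
        rw [hfun4, integral_add h41 h23445, integral_add h42 h3445,
          integral_add h43 h445, integral_add h44 h45]
        rw [hterm_int, hterm_int, hterm_int, hterm_int, hterm_int,
          mymom4, mymom3, mymom2, mymom1, mymom0, hPn0]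
        rw [show (∫ (y : Fin n → ℝ), S y ^ 2 ∂Pn) = A from ihm2,
          show (∫ (y : Fin n → ℝ), S y ^ 4 ∂Pn) = 3 * A ^ 2 from ihm4, hsum]
        ring

lemma myunif_compl (Δ : ℝ) :
    unifMeasure Δ (Set.Icc (-(Δ / 2)) (Δ / 2))ᶜ = 0 := by
  rw [unifMeasure]
  simp [Measure.restrict_apply (MeasurableSet.compl measurableSet_Icc)]

lemma myunif_univ {Δ : ℝ} (hΔ : 0 < Δ) : unifMeasure Δ Set.univ = 1 := by
  rw [unifMeasure]
  simp [Real.volume_Icc]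
  exact ENNReal.inv_mul_cancel (by simp [hΔ]) ENNReal.ofReal_ne_top

lemma mytri_supp {Δ : ℝ} (hΔ : 0 < Δ) :
    triMeasure Δ {t : ℝ | Δ < |t|} = 0 := by
  rw [triMeasure, Measure.map_apply (f := fun p : ℝ × ℝ => p.1 + p.2) (by fun_prop)
    (measurableSet_lt measurable_const measurable_abs)]
  haveI : IsFiniteMeasure (unifMeasure Δ) :=
    ⟨by rw [myunif_univ hΔ]; exact ENNReal.one_lt_top⟩
  set I := Set.Icc (-(Δ / 2)) (Δ / 2) with hI
  refine measure_mono_null (t := (Iᶜ ×ˢ (Set.univ : Set ℝ)) ∪ ((Set.univ : Set ℝ) ×ˢ Iᶜ)) ?_ ?_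
  · intro p hp
    by_contra hc
    simp only [Set.mem_union, Set.mem_prod, Set.mem_univ, and_true, true_and,
      Set.mem_compl_iff, not_or, not_not] at hc
    obtain ⟨h1, h2⟩ := hc
    simp only [Set.mem_preimage, Set.mem_setOf_eq] at hp
    rw [hI, Set.mem_Icc] at h1 h2
    have : |p.1 + p.2| ≤ Δ := by
      rw [abs_le]; constructor <;> linarith
    linarith [hp, this]
  · apply measure_union_null
    · rw [Measure.prod_prod, myunif_compl, zero_mul]
    · rw [Measure.prod_prod, myunif_compl, mul_zero]


lemma mytri_prob {Δ : ℝ} (hΔ : 0 < Δ) : IsProbabilityMeasure (triMeasure Δ) := by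
  haveI : IsFiniteMeasure (unifMeasure Δ) :=
    ⟨by rw [myunif_univ hΔ]; exact ENNReal.one_lt_top⟩
  constructor
  rw [triMeasure, Measure.map_apply (f := fun p : ℝ × ℝ => p.1 + p.2) (by fun_prop) MeasurableSet.univ,
    Set.preimage_univ, ← Set.univ_prod_univ, Measure.prod_prod, myunif_univ hΔ, one_mul]

lemma myquant_abs {Δ : ℝ} (hΔ : 0 < Δ) (y : ℝ) : |quant Δ y| ≤ |y| + Δ / 2 := by
  have h1 : (⌊y / Δ⌋ : ℝ) ≤ y / Δ := Int.floor_le _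
  have h2 : y / Δ < ⌊y / Δ⌋ + 1 := Int.lt_floor_add_one _
  have hy : Δ * (y / Δ) = y := by field_simp
  have ha := le_abs_self y
  have hb := neg_abs_le y
  rw [quant, abs_le]
  constructor
  · nlinarith [mul_lt_mul_of_pos_left h2 hΔ]
  · nlinarith [mul_le_mul_of_nonneg_left h1 hΔ.le]

lemma mydiag_le {d : ℕ} (T : Matrix (Fin d) (Fin d) ℝ) (i : Fin d) :
    |T i i| ≤ opNorm T := by
  classical
  set A := Matrix.toEuclideanCLM (𝕜 := ℝ) T with hA
  set ei : EuclideanSpace ℝ (Fin d) := EuclideanSpace.single i 1 with hei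
  have happ : A ei = (Matrix.toEuclideanLin T) ei := by
    rw [hA, ← Matrix.coe_toEuclideanCLM_eq_toEuclideanLin]
    rfl
  have hval : inner ℝ ei (A ei) = T i i := by
    rw [EuclideanSpace.inner_single_left, happ, Matrix.toEuclideanLin_apply]
    have h1 : (WithLp.equiv 2 (Fin d → ℝ)) ei = Pi.single i 1 := rfl
    have h2 : ∀ v : Fin d → ℝ,
        ((WithLp.equiv 2 (Fin d → ℝ)).symm v : EuclideanSpace ℝ (Fin d)) i = v i := fun _ => rfl
    rw [show ei.ofLp = Pi.single i 1 from rfl, Matrix.mulVec_single]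
    simp
  have h1 : |T i i| ≤ ‖ei‖ * ‖A ei‖ := by
    rw [← hval]; exact abs_real_inner_le_norm ei (A ei)
  have h2 : ‖A ei‖ ≤ ‖A‖ * ‖ei‖ := A.le_opNorm ei
  have h3 : ‖ei‖ = 1 := by rw [hei, EuclideanSpace.norm_single]; norm_num
  rw [opNorm, ← hA]
  rw [h3, mul_one] at h2
  rw [h3, one_mul] at h1
  linarith

end MyAux
end

/-- fourth-moment bound for the dithered quantized sample:
`E[(ẋ_j ẋ_k)²] ≤ 24‖T‖₂² + (81/2)Δ⁴`. -/
theorem quantized_sample_fourth_moment_bound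
    {d : ℕ} {Ω : Type} [MeasurableSpace Ω] (μ : Measure Ω) [IsProbabilityMeasure μ]
    (T : Matrix (Fin d) (Fin d) ℝ) (hpsd : T.PosSemidef)
    (htoep : ∃ v : Fin d → ℝ, T = toep v)
    (Δ : ℝ) (hΔ : 0 < Δ)
    (x τ : Ω → Fin d → ℝ) (hx : Measurable x) (hτ : Measurable τ)
    (hlawx : μ.map x = multiGaussian T hpsd)
    (hlawτ : μ.map τ = Measure.pi fun _ : Fin d => triMeasure Δ)
    (hindep : IndepFun x τ μ) :
    ∀ j k, ∫ ω, (quant Δ (x ω j + τ ω j) * quant Δ (x ω k + τ ω k)) ^ 2 ∂μ ≤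
      24 * opNorm T ^ 2 + 81 / 2 * Δ ^ 4 := by
  intro j k
  classical
  set S : Matrix (Fin d) (Fin d) ℝ := (hpsd.1.eigenvectorUnitary : Matrix (Fin d) (Fin d) ℝ) *
      diagonal (fun i => ((Real.sqrt (hpsd.1.eigenvalues i) : ℝ) : ℝ)) *
      (star hpsd.1.eigenvectorUnitary : Matrix (Fin d) (Fin d) ℝ) with hSdef
  have hSmul : Measurable (fun z : Fin d → ℝ => S.mulVec z) := by
    apply measurable_pi_lambda
    intro l
    have hl : (fun z : Fin d → ℝ => S.mulVec z l) = fun z => ∑ m, S l m * z m := by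
      funext z; simp [Matrix.mulVec, dotProduct]
    rw [hl]
    exact Finset.measurable_sum _ fun m _ => (measurable_pi_apply m).const_mul _
  have hmg : ∀ i : Fin d, Integrable (fun ω => (x ω i) ^ 4) μ ∧
      ∫ ω, (x ω i) ^ 4 ∂μ = 3 * (T i i) ^ 2 := by
    intro i
    have hkey := MyAux.mykey d (fun m => S i m)
    have hcompeq : (fun z : Fin d → ℝ => (S.mulVec z i) ^ 4)
        = fun z => (∑ m, S i m * z m) ^ 4 := by
      funext z; simp [Matrix.mulVec, dotProduct]
    have hTii : (∑ m, (S i m) ^ 2) = T i i := by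
      have hmul : S * S = T := by
        have hU : (star hpsd.1.eigenvectorUnitary : Matrix (Fin d) (Fin d) ℝ) *
            (hpsd.1.eigenvectorUnitary : Matrix (Fin d) (Fin d) ℝ) = 1 :=
          Unitary.coe_star_mul_self _
        have hD : diagonal (fun i => Real.sqrt (hpsd.1.eigenvalues i)) *
            diagonal (fun i => Real.sqrt (hpsd.1.eigenvalues i))
              = diagonal (RCLike.ofReal ∘ hpsd.1.eigenvalues) := by
          rw [diagonal_mul_diagonal]
          congr 1; funext i
          simp [Real.mul_self_sqrt (hpsd.eigenvalues_nonneg i)]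
        conv_rhs => rw [hpsd.1.spectral_theorem, Unitary.conjStarAlgAut_apply]
        rw [hSdef, ← hD]
        simp only [Matrix.mul_assoc]
        rw [← Matrix.mul_assoc (star _ : Matrix (Fin d) (Fin d) ℝ) _ (diagonal _ * _), hU,
          Matrix.one_mul]
      have hsym : ∀ a b, S a b = S b a := by
        intro a b
        have hSH : Sᴴ = S := by
          simp [hSdef, Matrix.conjTranspose_mul, Matrix.mul_assoc, Matrix.star_eq_conjTranspose,
            Matrix.conjTranspose_eq_transpose_of_trivial]
        have h := congrFun (congrFun hSH b) a
        simpa using h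
      calc (∑ m, (S i m) ^ 2) = ∑ m, S i m * S m i := by
            refine Finset.sum_congr rfl fun m _ => ?_
            rw [sq, hsym i m]
          _ = (S * S) i i := by rw [Matrix.mul_apply]
          _ = T i i := by rw [hmul]
    have hfmeas : Measurable (fun v : Fin d → ℝ => (v i) ^ 4) :=
      (measurable_pi_apply i).pow_const 4
    have h1 : Integrable (fun v : Fin d → ℝ => (v i) ^ 4) (multiGaussian T hpsd) := by
      rw [multiGaussian,
        integrable_map_measure hfmeas.aestronglyMeasurable hSmul.aemeasurable]
      have hc : ((fun v : Fin d → ℝ => (v i) ^ 4) ∘ fun z => S.mulVec z)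
          = fun z => (∑ m, S i m * z m) ^ 4 := by
        funext z; simp [Function.comp, Matrix.mulVec, dotProduct]
      rw [hc]
      exact hkey.1
    constructor
    · have h2 : Integrable ((fun v : Fin d → ℝ => (v i) ^ 4) ∘ x) μ := by
        rw [← integrable_map_measure (by rw [hlawx]; exact hfmeas.aestronglyMeasurable)
          hx.aemeasurable, hlawx]
        exact h1
      exact h2
    · calc ∫ ω, (x ω i) ^ 4 ∂μ = ∫ v, (v i) ^ 4 ∂(μ.map x) :=
            (integral_map hx.aemeasurable
              (by rw [hlawx]; exact hfmeas.aestronglyMeasurable)).symm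
        _ = ∫ v, (v i) ^ 4 ∂(multiGaussian T hpsd) := by rw [hlawx]
        _ = ∫ z, (S.mulVec z i) ^ 4 ∂(Measure.pi fun _ : Fin d => gaussianReal 0 1) := by
            rw [multiGaussian, integral_map hSmul.aemeasurable
              hfmeas.aestronglyMeasurable]
        _ = ∫ z, (∑ m, S i m * z m) ^ 4 ∂(Measure.pi fun _ : Fin d => gaussianReal 0 1) := by
            rw [hcompeq]
        _ = 3 * (∑ m, (S i m) ^ 2) ^ 2 := hkey.2.2
        _ = 3 * (T i i) ^ 2 := by rw [hTii]
  have htau : ∀ i : Fin d, ∀ᵐ ω ∂μ, |τ ω i| ≤ Δ := by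
    intro i
    rw [ae_iff]
    have hB : MeasurableSet {t : ℝ | Δ < |t|} :=
      measurableSet_lt measurable_const measurable_abs
    have hset : {ω | ¬|τ ω i| ≤ Δ} = τ ⁻¹' (Function.eval i ⁻¹' {t : ℝ | Δ < |t|}) := by
      ext ω; simp [not_le, Function.eval]
    haveI := MyAux.mytri_prob hΔ
    rw [hset, ← Measure.map_apply hτ ((measurable_pi_apply i) hB), hlawτ]
    exact Measure.pi_eval_preimage_null _ (MyAux.mytri_supp hΔ)
  have hIj := (hmg j).1
  have hIk := (hmg k).1
  have hg1 : Integrable (fun ω => 4 * (x ω j) ^ 4 + 4 * (x ω k) ^ 4) μ :=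
    (hIj.const_mul 4).add (hIk.const_mul 4)
  have hgint : Integrable
      (fun ω => 4 * (x ω j) ^ 4 + 4 * (x ω k) ^ 4 + 8 * (3 * Δ / 2) ^ 4) μ :=
    hg1.add (integrable_const _)
  have hub : ∀ᵐ ω ∂μ, (quant Δ (x ω j + τ ω j) * quant Δ (x ω k + τ ω k)) ^ 2 ≤
      4 * (x ω j) ^ 4 + 4 * (x ω k) ^ 4 + 8 * (3 * Δ / 2) ^ 4 := by
    filter_upwards [htau j, htau k] with ω h1 h2
    set qj := quant Δ (x ω j + τ ω j) with hqj
    set qk := quant Δ (x ω k + τ ω k) with hqk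
    have hbj : |qj| ≤ |x ω j| + 3 * Δ / 2 := by
      calc |qj| ≤ |x ω j + τ ω j| + Δ / 2 := MyAux.myquant_abs hΔ _
        _ ≤ |x ω j| + |τ ω j| + Δ / 2 := by linarith [abs_add_le (x ω j) (τ ω j)]
        _ ≤ |x ω j| + 3 * Δ / 2 := by linarith
    have hbk : |qk| ≤ |x ω k| + 3 * Δ / 2 := by
      calc |qk| ≤ |x ω k + τ ω k| + Δ / 2 := MyAux.myquant_abs hΔ _
        _ ≤ |x ω k| + |τ ω k| + Δ / 2 := by linarith [abs_add_le (x ω k) (τ ω k)]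
        _ ≤ |x ω k| + 3 * Δ / 2 := by linarith
    set aj := |x ω j| with haj
    set ak := |x ω k| with hak
    have haj0 : 0 ≤ aj := abs_nonneg _
    have hak0 : 0 ≤ ak := abs_nonneg _
    have hD0 : 0 ≤ 3 * Δ / 2 := by linarith
    have hstep1 : (qj * qk) ^ 2 ≤ ((aj + 3 * Δ / 2) * (ak + 3 * Δ / 2)) ^ 2 := by
      have habs : (qj * qk) ^ 2 = (|qj| * |qk|) ^ 2 := by
        rw [← abs_mul, sq_abs]
      rw [habs]
      apply pow_le_pow_left₀ (by positivity)
      exact mul_le_mul hbj hbk (abs_nonneg _) (by linarith)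
    have hstep2 : ((aj + 3 * Δ / 2) * (ak + 3 * Δ / 2)) ^ 2
        ≤ 4 * aj ^ 4 + 4 * ak ^ 4 + 8 * (3 * Δ / 2) ^ 4 := by
      nlinarith [sq_nonneg ((aj + 3 * Δ / 2) ^ 2 - (ak + 3 * Δ / 2) ^ 2),
        sq_nonneg (aj - 3 * Δ / 2), sq_nonneg (ak - 3 * Δ / 2),
        sq_nonneg (aj ^ 2 - (3 * Δ / 2) ^ 2), sq_nonneg (ak ^ 2 - (3 * Δ / 2) ^ 2),
        mul_nonneg haj0 hD0, mul_nonneg hak0 hD0, sq_nonneg (aj + 3 * Δ / 2),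
        sq_nonneg (ak + 3 * Δ / 2), mul_nonneg (mul_nonneg haj0 haj0) hD0,
        mul_nonneg (mul_nonneg hak0 hak0) hD0]
    have hpowj : aj ^ 4 = (x ω j) ^ 4 := by
      rw [haj, ← abs_pow, abs_of_nonneg (by positivity)]
    have hpowk : ak ^ 4 = (x ω k) ^ 4 := by
      rw [hak, ← abs_pow, abs_of_nonneg (by positivity)]
    calc (qj * qk) ^ 2 ≤ 4 * aj ^ 4 + 4 * ak ^ 4 + 8 * (3 * Δ / 2) ^ 4 :=
          le_trans hstep1 hstep2
      _ = 4 * (x ω j) ^ 4 + 4 * (x ω k) ^ 4 + 8 * (3 * Δ / 2) ^ 4 := by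
          rw [hpowj, hpowk]
  refine le_trans (integral_mono_of_nonneg (ae_of_all _ fun ω => sq_nonneg _) hgint hub) ?_
  rw [integral_add hg1 (integrable_const _),
    integral_add (hIj.const_mul 4) (hIk.const_mul 4),
    MeasureTheory.integral_const_mul, MeasureTheory.integral_const_mul, integral_const,
    (hmg j).2, (hmg k).2]
  simp only [measure_univ, ENNReal.toReal_one, smul_eq_mul, one_mul, probReal_univ]
  have d1 : (T j j) ^ 2 ≤ opNorm T ^ 2 := by
    have h := MyAux.mydiag_le T j
    nlinarith [abs_nonneg (T j j), sq_abs (T j j)]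
  have d2 : (T k k) ^ 2 ≤ opNorm T ^ 2 := by
    have h := MyAux.mydiag_le T k
    nlinarith [abs_nonneg (T k k), sq_abs (T k k)]
  nlinarith [d1, d2]
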